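/- arXiv:1208.3830 — 3 statements merged into one kernel-verified Lean document; each statement's English description precedes it below -/
import Mathlib

section
/- Fix reals r, b, σ, β, T, c₁, c₂ with b > r > 0, σ ≠ 0, β > 2, T > 0, c₁ < 0 ≤ c₂, η := β(b−r)²/(2(β−1)σ²) − βr ≠ 0, and suppose c₁ ≤ ũ := −(b−r)/((β−1)σ²) ≤ c₂. Define w(t) := (1/η)·(1 − e^{η(t−T)}) and v(t,x) := (−x)^{β}·w(t) for x ≤ 0 and v(t,x) := 0 for x > 0. Then v(T,x) = 0 for all x ≤ 0, the partial derivatives ∂ₜv, ∂ₓv, ∂²ₓv exist and are continuous on [0,T] × (−∞,0], and for every (t,x) ∈ [0,T] × (−∞,0]: −∂ₜv(t,x) = min over u ∈ [c₁,c₂] of [ (1/2)·(σ·u·x)²·∂²ₓv(t,x) + (r + (b−r)u)·x·∂ₓv(t,x) + (−x)^{β} ], with the minimum attained at u = ũ. -/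
open Real Set

theorem stmt3 (r b σ β T c₁ c₂ η u0 : ℝ)
    (hbr : r < b) (hr : 0 < r) (hσ : σ ≠ 0) (hβ : 2 < β) (hT : 0 < T)
    (hc₁ : c₁ < 0) (hc₂ : 0 ≤ c₂)
    (hη : η = β * (b - r)^2 / (2 * (β - 1) * σ^2) - β * r) (hη0 : η ≠ 0)
    (hu0 : u0 = -(b - r) / ((β - 1) * σ^2)) (hu0c : u0 ∈ Set.Icc c₁ c₂)
    (w : ℝ → ℝ) (hw : w = fun t => (1/η) * (1 - Real.exp (η * (t - T))))
    (v : ℝ → ℝ → ℝ) (hv : v = fun t x => if x ≤ 0 then (-x) ^ β * w t else 0) :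
    (∀ x ≤ (0:ℝ), v T x = 0) ∧
    ∃ vt vx vxx : ℝ → ℝ → ℝ,
      (∀ t ∈ Set.Icc (0:ℝ) T, ∀ x ≤ (0:ℝ),
        HasDerivWithinAt (fun s => v s x) (vt t x) (Set.Icc (0:ℝ) T) t ∧
        HasDerivWithinAt (fun y => v t y) (vx t x) (Set.Iic (0:ℝ)) x ∧
        HasDerivWithinAt (fun y => vx t y) (vxx t x) (Set.Iic (0:ℝ)) x) ∧
      ContinuousOn (fun p : ℝ × ℝ => vt p.1 p.2) (Set.Icc (0:ℝ) T ×ˢ Set.Iic (0:ℝ)) ∧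
      ContinuousOn (fun p : ℝ × ℝ => vx p.1 p.2) (Set.Icc (0:ℝ) T ×ˢ Set.Iic (0:ℝ)) ∧
      ContinuousOn (fun p : ℝ × ℝ => vxx p.1 p.2) (Set.Icc (0:ℝ) T ×ˢ Set.Iic (0:ℝ)) ∧
      (∀ t ∈ Set.Icc (0:ℝ) T, ∀ x ≤ (0:ℝ),
        (-(vt t x) =
          (1/2) * (σ * u0 * x)^2 * vxx t x + (r + (b - r) * u0) * x * vx t x + (-x) ^ β) ∧
        (∀ u ∈ Set.Icc c₁ c₂, -(vt t x) ≤
          (1/2) * (σ * u * x)^2 * vxx t x + (r + (b - r) * u) * x * vx t x + (-x) ^ β)) := by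
  have hβ1 : (1:ℝ) < β - 1 := by linarith
  have hβ1' : (β:ℝ) - 1 ≠ 0 := by linarith
  have hσ2 : (0:ℝ) < σ^2 := by positivity
  -- general derivative lemma
  have hder : ∀ p : ℝ, 1 ≤ p → ∀ y : ℝ,
      HasDerivAt (fun z : ℝ => (-z) ^ p) (-(p * (-y) ^ (p-1))) y := by
    intro p hp y
    have h := (Real.hasDerivAt_rpow_const (x := -y) (p := p) (Or.inr hp)).comp y
      (hasDerivAt_neg y)
    simpa [Function.comp_def] using h
  -- continuity lemma
  have hcont : ∀ p : ℝ, 0 ≤ p → Continuous (fun z : ℝ => (-z) ^ p) := by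
    intro p hp
    rw [continuous_iff_continuousAt]
    intro y
    exact (Real.continuousAt_rpow_const (-y) p (Or.inr hp)).comp continuous_neg.continuousAt
  -- w nonneg on t ≤ T
  have hw0 : ∀ t : ℝ, t ≤ T → 0 ≤ w t := by
    intro t htT
    rw [hw]
    rcases lt_or_gt_of_ne hη0 with h | h
    · have h1 : (1:ℝ) ≤ Real.exp (η * (t - T)) := by
        rw [show (1:ℝ) = Real.exp 0 by simp]
        exact Real.exp_le_exp.mpr (by nlinarith)
      have h2 : 1/η ≤ 0 := by
        apply div_nonpos_of_nonneg_of_nonpos <;> linarith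
      nlinarith
    · have h1 : Real.exp (η * (t - T)) ≤ 1 := by
        rw [show (1:ℝ) = Real.exp 0 by simp]
        exact Real.exp_le_exp.mpr (by nlinarith)
      have h2 : 0 ≤ 1/η := by positivity
      nlinarith
  constructor
  · intro x hx
    simp [hv, hw, if_pos hx]
  refine ⟨fun t x => (-x) ^ β * (-(Real.exp (η * (t - T)))),
    fun t x => -β * (-x) ^ (β - 1) * w t,
    fun t x => β * (β - 1) * (-x) ^ (β - 2) * w t, ?_, ?_, ?_, ?_, ?_⟩
  · intro t ht x hx
    refine ⟨?_, ?_, ?_⟩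
    · have h2 : HasDerivAt (fun s : ℝ => η * (s - T)) η t := by
        simpa using ((hasDerivAt_id t).sub_const T).const_mul η
      have h3 : HasDerivAt (fun s => Real.exp (η * (s - T)))
          (Real.exp (η * (t - T)) * η) t := by
        simpa [Function.comp_def] using (Real.hasDerivAt_exp (η * (t - T))).comp t h2
      have h4 := (((hasDerivAt_const t (1:ℝ)).sub h3).const_mul (1/η)).const_mul ((-x) ^ β)
      have heq : (fun s => v s x) = fun s => (-x) ^ β * ((1/η) * (1 - Real.exp (η * (s - T)))) := by
        funext s
        simp [hv, hw, if_pos hx]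
      rw [heq]
      refine HasDerivAt.hasDerivWithinAt ?_
      refine h4.congr_deriv ?_
      field_simp
      ring
    · have hd : HasDerivAt (fun y : ℝ => (-y) ^ β * w t) (-β * (-x) ^ (β - 1) * w t) x := by
        have := (hder β (by linarith) x).mul_const (w t)
        refine this.congr_deriv ?_
        ring
      refine hd.hasDerivWithinAt.congr (fun y hy => ?_) ?_
      · simp only [hv]
        rw [if_pos (Set.mem_Iic.mp hy)]
      · simp only [hv]
        rw [if_pos hx]
    · have hd : HasDerivAt (fun y : ℝ => -β * (-y) ^ (β - 1) * w t)
          (β * (β - 1) * (-x) ^ (β - 2) * w t) x := by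
        have h := ((hder (β - 1) (le_of_lt hβ1) x).const_mul (-β)).mul_const (w t)
        rw [show β - 1 - 1 = β - 2 by ring] at h
        refine h.congr_deriv ?_
        ring
      exact hd.hasDerivWithinAt
  · exact ((((hcont β (by linarith)).comp continuous_snd).mul
      ((Real.continuous_exp.comp ((continuous_const.mul
        (continuous_fst.sub continuous_const)))).neg)).continuousOn)
  · rw [hw]
    exact ((continuous_const.mul ((hcont (β-1) (by linarith)).comp continuous_snd)).mul
      (continuous_const.mul (continuous_const.sub (Real.continuous_exp.comp
        (continuous_const.mul (continuous_fst.sub continuous_const)))))).continuousOn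
  · rw [hw]
    exact ((continuous_const.mul ((hcont (β-2) (by linarith)).comp continuous_snd)).mul
      (continuous_const.mul (continuous_const.sub (Real.continuous_exp.comp
        (continuous_const.mul (continuous_fst.sub continuous_const)))))).continuousOn
  · intro t ht x hx
    have hA : x^2 * (-x) ^ (β - 2) = (-x) ^ β := by
      rcases eq_or_lt_of_le hx with h | h
      · rw [h]
        simp [Real.zero_rpow (show β - 2 ≠ 0 by linarith), Real.zero_rpow (show β ≠ 0 by linarith)]
      · have hx0 : (0:ℝ) < -x := by linarith
        have : (-x) ^ β = (-x) ^ (2:ℝ) * (-x) ^ (β - 2) := by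
          rw [← Real.rpow_add hx0]; ring_nf
        rw [this, show ((2:ℝ) = ((2:ℕ):ℝ)) by norm_num, Real.rpow_natCast]
        ring
    have hB : x * (-x) ^ (β - 1) = -((-x) ^ β) := by
      rcases eq_or_lt_of_le hx with h | h
      · rw [h]
        simp [Real.zero_rpow (show β ≠ 0 by linarith)]
      · have hx0 : (0:ℝ) < -x := by linarith
        have : (-x) ^ β = (-x) ^ (1:ℝ) * (-x) ^ (β - 1) := by
          rw [← Real.rpow_add hx0]; ring_nf
        rw [this, Real.rpow_one]
        ring
    have key : ∀ u : ℝ,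
        (1/2) * (σ * u * x)^2 * (β * (β - 1) * (-x) ^ (β - 2) * w t)
          + (r + (b - r) * u) * x * (-β * (-x) ^ (β - 1) * w t) + (-x) ^ β
        = (-x) ^ β * (((1/2) * σ^2 * β * (β - 1) * u^2 + (r + (b - r) * u) * β) * w t + 1) := by
      intro u
      linear_combination ((1/2) * σ^2 * u^2 * β * (β - 1) * w t) * hA
        - ((r + (b - r) * u) * β * w t) * hB
    have hwE : η * w t = 1 - Real.exp (η * (t - T)) := by
      rw [hw]
      field_simp
    have hg0 : (1/2) * σ^2 * β * (β - 1) * u0^2 + (r + (b - r) * u0) * β = -η := by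
      rw [hu0, hη]
      field_simp
      ring
    have heq : -((-x) ^ β * (-(Real.exp (η * (t - T)))))
        = (1/2) * (σ * u0 * x)^2 * (β * (β - 1) * (-x) ^ (β - 2) * w t)
          + (r + (b - r) * u0) * x * (-β * (-x) ^ (β - 1) * w t) + (-x) ^ β := by
      rw [key u0, hg0]
      linear_combination ((-x) ^ β) * hwE
    refine ⟨heq, ?_⟩
    intro u hu
    rw [heq, key u, key u0]
    have hdiff : ((1/2) * σ^2 * β * (β - 1) * u^2 + (r + (b - r) * u) * β)
        - ((1/2) * σ^2 * β * (β - 1) * u0^2 + (r + (b - r) * u0) * β)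
        = (1/2) * σ^2 * β * (β - 1) * (u - u0)^2 := by
      have hkey : (β - 1) * σ^2 * u0 = -(b - r) := by
        rw [hu0]; field_simp
      linear_combination (β * (u - u0)) * hkey
    have hA0 : 0 ≤ (-x) ^ β := Real.rpow_nonneg (by linarith) β
    have hw0' : 0 ≤ w t := hw0 t ht.2
    have hfin : 0 ≤ (-x) ^ β * (w t * ((1/2) * σ^2 * β * (β - 1) * (u - u0)^2)) :=
      mul_nonneg hA0 (mul_nonneg hw0' (mul_nonneg
        (by positivity : (0:ℝ) ≤ (1/2) * σ^2 * β * (β - 1)) (sq_nonneg (u - u0))))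
    calc (-x) ^ β * (((1/2) * σ^2 * β * (β - 1) * u0^2 + (r + (b - r) * u0) * β) * w t + 1)
        ≤ (-x) ^ β * (((1/2) * σ^2 * β * (β - 1) * u0^2 + (r + (b - r) * u0) * β) * w t + 1)
          + (-x) ^ β * (w t * ((1/2) * σ^2 * β * (β - 1) * (u - u0)^2)) :=
          le_add_of_nonneg_right hfin
      _ = (-x) ^ β * (((1/2) * σ^2 * β * (β - 1) * u^2 + (r + (b - r) * u) * β) * w t + 1) := by
          linear_combination (-((-x) ^ β * w t)) * hdiff
end

section
/- Fix reals r, b, σ, β, T, c₁, c₂ with b > r > 0, σ ≠ 0, β > 2, T > 0, c₁ < 0 ≤ c₂, η := β(b−r)²/(2(β−1)σ²) − βr, and suppose c₁ ≤ ũ := −(b−r)/((β−1)σ²) ≤ c₂. Define v(t,x) := (−x)^{β}·e^{η(t−T)} for x ≤ 0 and v(t,x) := 0 for x > 0. Then v(T,x) = (−x)^{β} for all x ≤ 0, the partial derivatives ∂ₜv, ∂ₓv, ∂²ₓv exist and are continuous on [0,T] × (−∞,0], and for every (t,x) ∈ [0,T] × (−∞,0]: −∂ₜv(t,x) = min over u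 ∈ [c₁,c₂] of [ (1/2)·(σ·u·x)²·∂²ₓv(t,x) + (r + (b−r)u)·x·∂ₓv(t,x) ], with the minimum attained at u = ũ. -/
open Real Set

private lemma hde_aux (η T t : ℝ) :
    HasDerivAt (fun s : ℝ => Real.exp (η * (s - T))) (η * Real.exp (η * (t - T))) t := by
  have h : HasDerivAt (fun s : ℝ => η * (s - T)) η t := by
    simpa using ((hasDerivAt_id t).sub_const T).const_mul η
  simpa [mul_comm] using h.exp

private lemma hdp_aux (p : ℝ) (hp : 1 ≤ p) (x : ℝ) :
    HasDerivAt (fun y : ℝ => (-y) ^ p) (-(p * (-x) ^ (p - 1))) x := by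
  have h1 : HasDerivAt (fun z : ℝ => z ^ p) (p * (-x) ^ (p - 1)) (-x) :=
    Real.hasDerivAt_rpow_const (Or.inr hp)
  have h2 : HasDerivAt (fun y : ℝ => -y) (-1) x := hasDerivAt_neg x
  have := h1.comp x h2
  simpa [Function.comp_def, mul_comm] using this

private lemma cont_aux (q : ℝ) (hq : 0 ≤ q) : Continuous fun z : ℝ => (-z) ^ q := by
  have : Continuous fun z : ℝ => z ^ q :=
    continuous_iff_continuousAt.2 fun z => Real.continuousAt_rpow_const z q (Or.inr hq)
  exact this.comp continuous_neg

theorem stmt7 (r b σ β T c₁ c₂ η u0 : ℝ)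
    (hbr : r < b) (hr : 0 < r) (hσ : σ ≠ 0) (hβ : 2 < β) (hT : 0 < T)
    (hc₁ : c₁ < 0) (hc₂ : 0 ≤ c₂)
    (hη : η = β * (b - r)^2 / (2 * (β - 1) * σ^2) - β * r)
    (hu0 : u0 = -(b - r) / ((β - 1) * σ^2)) (hu0c : u0 ∈ Set.Icc c₁ c₂)
    (v : ℝ → ℝ → ℝ)
    (hv : v = fun t x => if x ≤ 0 then (-x) ^ β * Real.exp (η * (t - T)) else 0) :
    (∀ x ≤ (0:ℝ), v T x = (-x) ^ β) ∧
    ∃ vt vx vxx : ℝ → ℝ → ℝ,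
      (∀ t ∈ Set.Icc (0:ℝ) T, ∀ x ≤ (0:ℝ),
        HasDerivWithinAt (fun s => v s x) (vt t x) (Set.Icc (0:ℝ) T) t ∧
        HasDerivWithinAt (fun y => v t y) (vx t x) (Set.Iic (0:ℝ)) x ∧
        HasDerivWithinAt (fun y => vx t y) (vxx t x) (Set.Iic (0:ℝ)) x) ∧
      ContinuousOn (fun p : ℝ × ℝ => vt p.1 p.2) (Set.Icc (0:ℝ) T ×ˢ Set.Iic (0:ℝ)) ∧
      ContinuousOn (fun p : ℝ × ℝ => vx p.1 p.2) (Set.Icc (0:ℝ) T ×ˢ Set.Iic (0:ℝ)) ∧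
      ContinuousOn (fun p : ℝ × ℝ => vxx p.1 p.2) (Set.Icc (0:ℝ) T ×ˢ Set.Iic (0:ℝ)) ∧
      (∀ t ∈ Set.Icc (0:ℝ) T, ∀ x ≤ (0:ℝ),
        (-(vt t x) =
          (1/2) * (σ * u0 * x)^2 * vxx t x + (r + (b - r) * u0) * x * vx t x) ∧
        (∀ u ∈ Set.Icc c₁ c₂, -(vt t x) ≤
          (1/2) * (σ * u * x)^2 * vxx t x + (r + (b - r) * u) * x * vx t x)) := by
  have hβ1 : (1:ℝ) ≤ β := by linarith
  have hβ1' : (1:ℝ) ≤ β - 1 := by linarith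
  have hβ1ne : β - 1 ≠ 0 := by linarith
  have hσ2 : σ ^ 2 ≠ 0 := pow_ne_zero 2 hσ
  have hσ2' : (0:ℝ) < σ ^ 2 := by positivity
  constructor
  · intro x hx
    rw [hv]; simp [hx]
  · refine ⟨fun t x => η * ((-x) ^ β * Real.exp (η * (t - T))),
      fun t x => -(β * (-x) ^ (β - 1)) * Real.exp (η * (t - T)),
      fun t x => β * ((β - 1) * (-x) ^ (β - 2)) * Real.exp (η * (t - T)),
      ?_, ?_, ?_, ?_, ?_⟩
    · intro t ht x hx
      refine ⟨?_, ?_, ?_⟩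
      · have hfun : (fun s => v s x) = fun s => (-x) ^ β * Real.exp (η * (s - T)) := by
          funext s; rw [hv]; exact if_pos hx
        rw [hfun]
        have := (hde_aux η T t).const_mul ((-x) ^ β)
        have heq : (-x) ^ β * (η * Real.exp (η * (t - T)))
            = η * ((-x) ^ β * Real.exp (η * (t - T))) := by ring
        exact (heq ▸ this).hasDerivWithinAt
      · have hg : HasDerivAt (fun y : ℝ => (-y) ^ β * Real.exp (η * (t - T)))
            (-(β * (-x) ^ (β - 1)) * Real.exp (η * (t - T))) x :=
          (hdp_aux β hβ1 x).mul_const _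
        refine hg.hasDerivWithinAt.congr (fun y hy => ?_) ?_
        · rw [hv]; exact if_pos hy
        · rw [hv]; exact if_pos hx
      · have h1 := ((hdp_aux (β - 1) hβ1' x).const_mul β).neg.mul_const
          (Real.exp (η * (t - T)))
        have heq : -(β * -((β - 1) * (-x) ^ (β - 1 - 1))) * Real.exp (η * (t - T))
            = β * ((β - 1) * (-x) ^ (β - 2)) * Real.exp (η * (t - T)) := by
          ring_nf
        have h2 : HasDerivAt (fun y : ℝ => -(β * (-y) ^ (β - 1)) * Real.exp (η * (t - T)))
            (β * ((β - 1) * (-x) ^ (β - 2)) * Real.exp (η * (t - T))) x := by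
          have h3 : β - 1 - 1 = β - 2 := by ring
          rw [h3] at h1
          have h4 : -(β * -((β - 1) * (-x) ^ (β - 2))) * Real.exp (η * (t - T))
              = β * ((β - 1) * (-x) ^ (β - 2)) * Real.exp (η * (t - T)) := by ring
          rw [h4] at h1
          exact h1
        exact h2.hasDerivWithinAt
    · apply Continuous.continuousOn
      exact continuous_const.mul (((cont_aux β (by linarith)).comp continuous_snd).mul
        (Real.continuous_exp.comp (continuous_const.mul (continuous_fst.sub continuous_const))))
    · apply Continuous.continuousOn
      exact (continuous_const.mul ((cont_aux (β - 1) (by linarith)).comp continuous_snd)).neg.mul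
        (Real.continuous_exp.comp (continuous_const.mul (continuous_fst.sub continuous_const)))
    · apply Continuous.continuousOn
      exact (continuous_const.mul (continuous_const.mul
        ((cont_aux (β - 2) (by linarith)).comp continuous_snd))).mul
        (Real.continuous_exp.comp (continuous_const.mul (continuous_fst.sub continuous_const)))
    · intro t ht x hx
      have hx' : (0:ℝ) ≤ -x := neg_nonneg.2 hx
      set e := Real.exp (η * (t - T)) with he
      have he0 : (0:ℝ) < e := Real.exp_pos _
      have hp0 : (0:ℝ) ≤ (-x) ^ β := Real.rpow_nonneg hx' β
      have aux1 : x ^ 2 * (-x) ^ (β - 2) = (-x) ^ β := by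
        rcases eq_or_lt_of_le hx with h | h
        · subst h
          simp [Real.zero_rpow (show β ≠ 0 by linarith),
            Real.zero_rpow (show β - 2 ≠ 0 by linarith)]
        · have h0 : (0:ℝ) < -x := by linarith
          have : (-x) ^ β = (-x) ^ (β - 2) * (-x) ^ (2:ℝ) := by
            rw [← Real.rpow_add h0]; norm_num
          rw [this]
          have h2 : (-x) ^ (2:ℝ) = x ^ 2 := by
            rw [show (2:ℝ) = ((2:ℕ):ℝ) by norm_num, Real.rpow_natCast]; ring
          rw [h2]; ring
      have aux2 : x * (-x) ^ (β - 1) = -(-x) ^ β := by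
        rcases eq_or_lt_of_le hx with h | h
        · subst h
          simp [Real.zero_rpow (show β ≠ 0 by linarith)]
        · have h0 : (0:ℝ) < -x := by linarith
          have : (-x) ^ β = (-x) ^ (β - 1) * (-x) ^ (1:ℝ) := by
            rw [← Real.rpow_add h0]; norm_num
          rw [this, Real.rpow_one]; ring
      have key : ∀ u : ℝ,
          (1/2) * (σ * u * x) ^ 2 * (β * ((β - 1) * (-x) ^ (β - 2)) * e)
            + (r + (b - r) * u) * x * (-(β * (-x) ^ (β - 1)) * e)
          = ((1/2) * σ ^ 2 * (β - 1) * u ^ 2 + (b - r) * u + r) * (β * ((-x) ^ β * e)) := by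
        intro u
        linear_combination ((1/2) * σ ^ 2 * u ^ 2 * β * (β - 1) * e) * aux1
          - ((r + (b - r) * u) * β * e) * aux2
      have hmin : -η = ((1/2) * σ ^ 2 * (β - 1) * u0 ^ 2 + (b - r) * u0 + r) * β := by
        subst hη hu0
        field_simp
        ring
      have hsq : ∀ u : ℝ,
          ((1/2) * σ ^ 2 * (β - 1) * u ^ 2 + (b - r) * u + r)
            - ((1/2) * σ ^ 2 * (β - 1) * u0 ^ 2 + (b - r) * u0 + r)
          = (1/2) * σ ^ 2 * (β - 1) * (u - u0) ^ 2 := by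
        intro u
        subst hu0
        field_simp
        ring
      have heqm : -(η * ((-x) ^ β * e)) =
          (1/2) * (σ * u0 * x) ^ 2 * (β * ((β - 1) * (-x) ^ (β - 2)) * e)
            + (r + (b - r) * u0) * x * (-(β * (-x) ^ (β - 1)) * e) := by
        rw [key u0]
        linear_combination ((-x) ^ β * e) * hmin
      refine ⟨heqm, fun u hu => ?_⟩
      rw [heqm, key u0, key u]
      have hc : (0:ℝ) ≤ β * ((-x) ^ β * e) := by positivity
      apply mul_le_mul_of_nonneg_right _ hc
      have h1 := hsq u
      have h2 : (0:ℝ) ≤ (1/2) * σ ^ 2 * (β - 1) * (u - u0) ^ 2 := by positivity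
      linarith
end

section
/- Let r, b, σ, β be reals with b > r > 0, σ ≠ 0, β > 2 such that η := β(b−r)²/(2(β−1)σ²) − βr > 0, let x₀ ∈ ℝ, and let W be a standard one-dimensional Brownian motion. Then the process Xₜ := x₀·exp{[r − (2β−1)(b−r)²/(2(β−1)²σ²)]·t − ((b−r)/((β−1)σ))·Wₜ} satisfies Xₜ → 0 almost surely as t → ∞. -/
open MeasureTheory ProbabilityTheory Filter

open scoped ENNReal NNReal
open Finset Real

/-- `W` is a standard one-dimensional Brownian motion (Wiener process) on `(Ω, F, P)`:
it starts at `0`, has continuous paths, Gaussian increments `W t - W s ~ N(0, t - s)`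
for `0 ≤ s ≤ t`, and independent increments over disjoint consecutive intervals. -/
structure IsStandardBrownianMotion {Ω : Type*} [MeasurableSpace Ω] (P : Measure Ω)
    (W : ℝ → Ω → ℝ) : Prop where
  measurable : ∀ t : ℝ, Measurable (W t)
  start : ∀ᵐ ω ∂P, W 0 ω = 0
  cont : ∀ᵐ ω ∂P, Continuous fun t => W t ω
  incr_law : ∀ s t : ℝ, 0 ≤ s → s ≤ t →
    P.map (fun ω => W t ω - W s ω) = gaussianReal 0 (Real.toNNReal (t - s))
  indep_incr : ∀ (n : ℕ) (τ : ℕ → ℝ), Monotone τ → (∀ i, 0 ≤ τ i) →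
    iIndepFun
      (fun i : Fin n => fun ω => W (τ (i + 1)) ω - W (τ i) ω) P

noncomputable def M4 : ℝ≥0∞ := ∫⁻ x, ENNReal.ofReal (x^4) ∂(gaussianReal 0 1)

lemma integrable_pow4_pdf : Integrable (fun x : ℝ => x^4 * Real.exp (-(1/2) * x^2)) := by
  have h := integrable_rpow_mul_exp_neg_mul_sq (b := 1/2) (by norm_num) (s := 4) (by norm_num)
  convert h using 2 with x
  rw [show (4:ℝ) = ((4:ℕ):ℝ) by norm_num, Real.rpow_natCast]

lemma gauss_one : gaussianReal 0 1 = MeasureTheory.volume.withDensity (gaussianPDF 0 1) :=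
  gaussianReal_of_var_ne_zero 0 one_ne_zero

lemma pdf_one (x : ℝ) : gaussianPDFReal 0 1 x = (Real.sqrt (2 * Real.pi))⁻¹ * Real.exp (-(1/2) * x^2) := by
  simp only [gaussianPDFReal, NNReal.coe_one, mul_one, sub_zero]
  congr 1
  ring

lemma M4_ne_top : M4 ≠ ⊤ := by
  have hmeas : Measurable (gaussianPDF 0 1) := measurable_gaussianPDF 0 1
  rw [M4, gauss_one, lintegral_withDensity_eq_lintegral_mul _ hmeas (by fun_prop)]
  have hint : Integrable (fun x : ℝ => gaussianPDFReal 0 1 x * x^4) := by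
    simp only [pdf_one]
    have := integrable_pow4_pdf.const_mul (Real.sqrt (2 * Real.pi))⁻¹
    convert this using 2 with x
    ring
  have hnn : 0 ≤ᵐ[MeasureTheory.volume] fun x : ℝ => gaussianPDFReal 0 1 x * x^4 := by
    filter_upwards with x
    exact mul_nonneg (gaussianPDFReal_nonneg _ _ _) (by positivity)
  have := MeasureTheory.ofReal_integral_eq_lintegral_ofReal hint hnn
  rw [show ((gaussianPDF 0 1) * fun x => ENNReal.ofReal (x^4)) = fun x => ENNReal.ofReal (gaussianPDFReal 0 1 x * x^4) by
    funext x
    simp [gaussianPDF, ← ENNReal.ofReal_mul (gaussianPDFReal_nonneg _ _ _)]]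
  rw [← this]
  exact ENNReal.ofReal_ne_top

lemma gauss_scale (v : ℝ≥0) :
    gaussianReal 0 v = (gaussianReal 0 1).map (fun x => Real.sqrt v * x) := by
  have h := gaussianReal_map_const_mul (μ := 0) (v := 1) (Real.sqrt v)
  rw [h]
  congr 1
  · simp
  · ext
    simp [Real.sq_sqrt v.coe_nonneg]

lemma lintegral_pow4_gauss (v : ℝ≥0) :
    ∫⁻ x, ENNReal.ofReal (x^4) ∂(gaussianReal 0 v) = ENNReal.ofReal ((v:ℝ)^2) * M4 := by
  rw [gauss_scale v, lintegral_map (by fun_prop) (by fun_prop)]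
  rw [M4, ← lintegral_const_mul _ (by fun_prop)]
  congr 1 with x
  rw [← ENNReal.ofReal_mul (by positivity)]
  congr 1
  have : Real.sqrt v ^ 4 = (v:ℝ)^2 := by
    rw [show (4:ℕ) = 2*2 by norm_num, pow_mul, Real.sq_sqrt v.coe_nonneg]
  rw [mul_pow, this]

lemma gauss_tail (v : ℝ≥0) {a : ℝ} (ha : 0 < a) :
    gaussianReal 0 v {x | a < |x|} ≤ ENNReal.ofReal ((v:ℝ)^2) * M4 / ENNReal.ofReal (a^4) := by
  have hsub : {x : ℝ | a < |x|} ⊆ {x : ℝ | ENNReal.ofReal (a^4) ≤ ENNReal.ofReal (x^4)} := by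
    intro x hx
    simp only [Set.mem_setOf_eq] at hx ⊢
    apply ENNReal.ofReal_le_ofReal
    calc a^4 ≤ |x|^4 := pow_le_pow_left₀ ha.le hx.le 4
    _ = x^4 := by rw [← abs_pow, abs_of_nonneg (by positivity)]
  calc gaussianReal 0 v {x | a < |x|} ≤ gaussianReal 0 v {x : ℝ | ENNReal.ofReal (a^4) ≤ ENNReal.ofReal (x^4)} :=
        measure_mono hsub
    _ ≤ (∫⁻ x, ENNReal.ofReal (x^4) ∂(gaussianReal 0 v)) / ENNReal.ofReal (a^4) := by
        apply meas_ge_le_lintegral_div (by fun_prop) (by simp [ha, pow_pos]) ENNReal.ofReal_ne_top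
    _ = ENNReal.ofReal ((v:ℝ)^2) * M4 / ENNReal.ofReal (a^4) := by rw [lintegral_pow4_gauss]

lemma integrable_id_gauss : Integrable (fun x : ℝ => x) (gaussianReal 0 1) := by
  rw [gauss_one, integrable_withDensity_iff (measurable_gaussianPDF 0 1)
    (by filter_upwards with x; exact ENNReal.ofReal_lt_top)]
  have : Integrable (fun x : ℝ => x * Real.exp (-(1/2) * x^2)) :=
    integrable_mul_exp_neg_mul_sq (by norm_num)
  have h2 := this.const_mul (Real.sqrt (2 * Real.pi))⁻¹
  apply h2.congr
  filter_upwards with x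
  simp only [gaussianPDF]
  rw [ENNReal.toReal_ofReal (gaussianPDFReal_nonneg 0 1 x), pdf_one]
  ring

lemma integral_id_gauss : ∫ x, x ∂(gaussianReal 0 1) = 0 := by
  have hmap : (gaussianReal 0 1).map (fun x => (-1 : ℝ) * x) = gaussianReal 0 1 := by
    rw [gaussianReal_map_const_mul (μ := 0) (v := 1) (-1)]
    congr 1
    · simp
    · ext; norm_num
  have h := integral_map (μ := gaussianReal 0 1) (φ := fun x => (-1:ℝ) * x)
    (by fun_prop) (f := fun x : ℝ => x) (by rw [hmap]; exact aestronglyMeasurable_id)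
  rw [hmap] at h
  simp only [neg_one_mul] at h
  rw [integral_neg] at h
  linarith

lemma chaining (f : ℝ → ℝ) (hf : Continuous f) (n : ℝ) (a : ℕ → ℝ) (S : ℝ)
    (ha : ∀ m, 0 ≤ a m)
    (hS : ∀ M : ℕ, ∑ m ∈ Finset.range M, a m ≤ S)
    (hbd : ∀ m k : ℕ, k < 2^(m+1) →
      |f (n + ((k:ℝ)+1)/2^(m+1)) - f (n + (k:ℝ)/2^(m+1))| ≤ a m)
    {t : ℝ} (ht : n ≤ t) (ht' : t < n + 1) : |f t - f n| ≤ S := by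
  set u : ℝ := t - n with hu
  have hu0 : 0 ≤ u := by simp [hu]; linarith
  have hu1 : u < 1 := by simp [hu]; linarith
  set s : ℕ → ℝ := fun M => (⌊u * 2^M⌋₊ : ℝ) / 2^M with hsdef
  have hs0 : s 0 = 0 := by
    simp [hsdef, Nat.floor_eq_zero.2 (by simpa using hu1)]
  have hstep : ∀ M : ℕ, |f (n + s (M+1)) - f (n + s M)| ≤ a M := by
    intro M
    set x : ℝ := u * 2^M with hx
    have hx0 : 0 ≤ x := by positivity
    have hxM : x < 2^M := by
      rw [hx]
      exact mul_lt_of_lt_one_left (by positivity) hu1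
    set k : ℕ := ⌊x⌋₊ with hk
    have hkx : (k:ℝ) ≤ x := Nat.floor_le hx0
    have hxk : x < k + 1 := Nat.lt_floor_add_one x
    have hx2 : u * 2^(M+1) = 2 * x := by rw [hx]; ring
    have h2k : 2*k ≤ ⌊u * 2^(M+1)⌋₊ := by
      rw [hx2]
      apply Nat.le_floor
      push_cast
      linarith
    have hlt : ⌊u * 2^(M+1)⌋₊ < 2*k + 2 := by
      rw [hx2]
      apply Nat.floor_lt (by positivity) |>.2
      push_cast
      linarith
    have hkM : k < 2^M := by
      have := Nat.floor_lt hx0 |>.2 (by exact_mod_cast hxM)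
      simpa using this
    rcases (by omega : ⌊u * 2^(M+1)⌋₊ = 2*k ∨ ⌊u * 2^(M+1)⌋₊ = 2*k+1) with h | h
    · have : s (M+1) = s M := by
        simp only [hsdef, h]
        push_cast
        rw [pow_succ]
        field_simp
        ring
        rfl
      rw [this]
      simpa using ha M
    · have h1 : s (M+1) = ((2*k:ℝ) + 1) / 2^(M+1) := by
        simp only [hsdef, h]; push_cast; ring_nf
      have h2 : s M = (2*k:ℝ) / 2^(M+1) := by
        simp only [hsdef]
        rw [pow_succ]
        field_simp
        ring
      have hbd' := hbd M (2*k) (by omega)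
      rw [h1, h2]
      convert hbd' using 4 <;> push_cast <;> ring
  have hI : ∀ M : ℕ, |f (n + s M) - f n| ≤ ∑ m ∈ Finset.range M, a m := by
    intro M
    induction M with
    | zero => simp [hs0]
    | succ M ih =>
        calc |f (n + s (M+1)) - f n|
            ≤ |f (n + s (M+1)) - f (n + s M)| + |f (n + s M) - f n| := abs_sub_le _ _ _
          _ ≤ a M + ∑ m ∈ Finset.range M, a m := add_le_add (hstep M) ih
          _ = ∑ m ∈ Finset.range (M+1), a m := by rw [Finset.sum_range_succ]; ring
  have hslim : Tendsto s atTop (nhds u) := by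
    have hb : ∀ M : ℕ, ‖s M - u‖ ≤ (1/2 : ℝ)^M := by
      intro M
      have h1 : (⌊u * 2^M⌋₊ : ℝ) ≤ u * 2^M := Nat.floor_le (by positivity)
      have h2 : u * 2^M < ⌊u * 2^M⌋₊ + 1 := Nat.lt_floor_add_one _
      have hp : (0:ℝ) < 2^M := by positivity
      have he : s M - u = ((⌊u * 2^M⌋₊ : ℝ) - u * 2^M)/2^M := by
        rw [hsdef]; field_simp
      rw [Real.norm_eq_abs, he, abs_div, abs_of_pos hp, div_le_iff₀ hp]
      have hm : (1/2:ℝ)^M * 2^M = 1 := by rw [← mul_pow]; norm_num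
      rw [hm, abs_le]
      constructor <;> linarith
    have h0 : Tendsto (fun M : ℕ => (1/2 : ℝ)^M) atTop (nhds 0) :=
      tendsto_pow_atTop_nhds_zero_of_lt_one (by norm_num) (by norm_num)
    have := squeeze_zero_norm hb h0
    have h := this.add (tendsto_const_nhds (x := u))
    simpa using h
  have hlim : Tendsto (fun M => |f (n + s M) - f n|) atTop (nhds (|f t - f n|)) := by
    have : Tendsto (fun M => n + s M) atTop (nhds t) := by
      have := hslim.const_add n
      simpa [hu] using this
    exact (((hf.tendsto t).comp this).sub tendsto_const_nhds).abs
  exact le_of_tendsto hlim (Filter.Eventually.of_forall fun M => (hI M).trans (hS M))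

lemma bm_slln {Ω : Type*} [MeasurableSpace Ω] (P : Measure Ω) [IsProbabilityMeasure P]
    (W : ℝ → Ω → ℝ) (hW : IsStandardBrownianMotion P W) :
    ∀ᵐ ω ∂P, Tendsto (fun n : ℕ => W n ω / n) atTop (nhds 0) := by
  set Y : ℕ → Ω → ℝ := fun i ω => W ((i:ℝ)+1) ω - W i ω with hY
  have hYmeas : ∀ i, Measurable (Y i) := fun i => (hW.measurable _).sub (hW.measurable _)
  have hYlaw : ∀ i : ℕ, P.map (Y i) = gaussianReal 0 1 := by
    intro i
    have h := hW.incr_law (i:ℝ) ((i:ℝ)+1) (by positivity) (by linarith)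
    have h1 : ((i:ℝ)+1) - i = 1 := by ring
    rw [h1, Real.toNNReal_one] at h
    exact h
  have hident : ∀ i, IdentDistrib (Y i) (Y 0) P P :=
    fun i => ⟨(hYmeas i).aemeasurable, (hYmeas 0).aemeasurable,
      by rw [hYlaw, hYlaw]⟩
  have hindep : Pairwise (Function.onFun (IndepFun · · P) Y) := by
    intro i j hij
    simp only [Function.onFun]
    have h := hW.indep_incr (max i j + 1) (fun k => (k:ℝ)) Nat.mono_cast
      (fun k => Nat.cast_nonneg k)
    have hi : i < max i j + 1 := by omega
    have hj : j < max i j + 1 := by omega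
    have h2 := h.indepFun (i := ⟨i, hi⟩) (j := ⟨j, hj⟩)
      (by simp [Fin.ext_iff]; exact hij)
    simpa only [hY, Fin.val_mk, Nat.cast_add, Nat.cast_one] using h2
  have hint : Integrable (Y 0) P := by
    have h : Integrable (id : ℝ → ℝ) (P.map (Y 0)) := by
      rw [hYlaw]; exact integrable_id_gauss
    rw [integrable_map_measure aestronglyMeasurable_id (hYmeas 0).aemeasurable] at h
    simpa [Function.comp] using h
  have hmean : ∫ ω, Y 0 ω ∂P = 0 := by
    have h2 : ∫ x, x ∂(P.map (Y 0)) = ∫ ω, Y 0 ω ∂P :=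
      integral_map (hYmeas 0).aemeasurable aestronglyMeasurable_id
    rw [hYlaw] at h2
    rw [← h2, integral_id_gauss]
  have hslln := strong_law_ae_real Y hint hindep hident
  rw [hmean] at hslln
  filter_upwards [hslln, hW.start] with ω hω h0
  have he : ∀ n : ℕ, ∑ i ∈ Finset.range n, Y i ω = W n ω := by
    intro n
    have h3 := Finset.sum_range_sub (f := fun i : ℕ => W (i:ℝ) ω) n
    simp only [Nat.cast_add, Nat.cast_one] at h3
    rw [hY]
    simp only
    rw [h3]
    simp [h0]
  have : (fun n : ℕ => (∑ i ∈ Finset.range n, Y i ω) / n) = fun n : ℕ => W n ω / n := by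
    funext n; rw [he]
  rwa [this] at hω

lemma bm_osc {Ω : Type*} [MeasurableSpace Ω] (P : Measure Ω) [IsProbabilityMeasure P]
    (W : ℝ → Ω → ℝ) (hW : IsStandardBrownianMotion P W) (ε : ℝ) (hε : 0 < ε) :
    ∀ᵐ ω ∂P, ∀ᶠ n : ℕ in atTop, ∀ t : ℝ, (n:ℝ) ≤ t → t < (n:ℝ)+1 →
      |W t ω - W n ω| ≤ ε * ((n:ℝ)+1) := by
  set thr : ℕ → ℕ → ℝ := fun n m => ε * ((n:ℝ)+1) * (1/10) * (9/10)^(m+1) with hthr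
  have hthrpos : ∀ n m, 0 < thr n m := by
    intro n m
    rw [hthr]
    have : (0:ℝ) < (n:ℝ)+1 := by positivity
    positivity
  set E : ℕ → ℕ → ℕ → Set Ω := fun n m k =>
    {ω | thr n m < |W ((n:ℝ) + ((k:ℝ)+1)/2^(m+1)) ω - W ((n:ℝ) + (k:ℝ)/2^(m+1)) ω|} with hE
  set A : ℕ → Set Ω := fun n => ⋃ (m : ℕ), ⋃ k ∈ Finset.range (2^(m+1)), E n m k with hA
  set D : ℕ → ℝ := fun n => (ε * ((n:ℝ)+1) * (1/10))^4 with hD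
  have hDpos : ∀ n, 0 < D n := by
    intro n
    rw [hD]
    have : (0:ℝ) < (n:ℝ)+1 := by positivity
    positivity
  -- per-event bound
  have hEbd : ∀ n m k : ℕ, k < 2^(m+1) →
      P (E n m k) ≤ M4 * ENNReal.ofReal ((2500/6561:ℝ)^(m+1) / D n) := by
    intro n m k hk
    set s : ℝ := (n:ℝ) + (k:ℝ)/2^(m+1) with hs
    set t : ℝ := (n:ℝ) + ((k:ℝ)+1)/2^(m+1) with ht
    have hs0 : 0 ≤ s := by rw [hs]; positivity
    have hst : s ≤ t := by
      rw [hs, ht]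
      have : (0:ℝ) < 2^(m+1) := by positivity
      gcongr
      linarith
    have hts : t - s = ((2:ℝ)^(m+1))⁻¹ := by rw [hs, ht]; field_simp; ring
    have hlaw := hW.incr_law s t hs0 hst
    rw [hts] at hlaw
    set v : NNReal := Real.toNNReal ((2:ℝ)^(m+1))⁻¹ with hv
    have hvc : (v:ℝ) = ((2:ℝ)^(m+1))⁻¹ := Real.coe_toNNReal _ (by positivity)
    have hmeasset : MeasurableSet {x : ℝ | thr n m < |x|} :=
      measurableSet_lt measurable_const measurable_abs
    have hmeasΔ : Measurable (fun ω => W t ω - W s ω) :=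
      (hW.measurable t).sub (hW.measurable s)
    have hPE : P (E n m k) = (P.map (fun ω => W t ω - W s ω)) {x : ℝ | thr n m < |x|} := by
      rw [Measure.map_apply hmeasΔ hmeasset]
      rfl
    rw [hPE, hlaw]
    calc gaussianReal 0 v {x : ℝ | thr n m < |x|}
        ≤ ENNReal.ofReal ((v:ℝ)^2) * M4 / ENNReal.ofReal ((thr n m)^4) :=
          gauss_tail v (hthrpos n m)
      _ = M4 * ENNReal.ofReal ((2500/6561:ℝ)^(m+1) / D n) := by
          rw [mul_comm (ENNReal.ofReal ((v:ℝ)^2)) M4, mul_div_assoc,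
            ← ENNReal.ofReal_div_of_pos (by positivity)]
          congr 1
          apply (ENNReal.ofReal_eq_ofReal_iff (by positivity)
            (div_nonneg (by positivity) (hDpos n).le)).2
          rw [hvc, hthr]
          simp only [hD]
          have h2 : ((((2:ℝ)^(m+1))⁻¹)^2) = ((4:ℝ)⁻¹)^(m+1) := by
            rw [← inv_pow, ← pow_mul, show (m+1)*2 = 2*(m+1) by ring, pow_mul]
            norm_num
          have h3 : (ε * ((n:ℝ)+1) * (1/10) * (9/10:ℝ)^(m+1))^4
              = (ε * ((n:ℝ)+1) * (1/10))^4 * (((9/10:ℝ)^4)^(m+1)) := by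
            rw [mul_pow, ← pow_mul, show (m+1)*4 = 4*(m+1) by ring, pow_mul]
          rw [h2, h3]
          have hDn : (0:ℝ) < (ε * ((n:ℝ)+1) * (1/10))^4 := by
            have : (0:ℝ) < (n:ℝ)+1 := by positivity
            positivity
          rw [div_eq_div_iff (mul_pos hDn (by positivity : (0:ℝ) < ((9/10:ℝ)^4)^(m+1))).ne' hDn.ne']
          rw [show ((9/10:ℝ)^4) = 6561/10000 by norm_num,
            show (4:ℝ)⁻¹ = (2500/6561) * (6561/10000) by norm_num, mul_pow]
          ring
  -- per-n bound
  set ρ : ℝ := 5000/6561 with hρ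
  have hAbd : ∀ n : ℕ, P (A n) ≤ M4 * (ENNReal.ofReal ((D n)⁻¹) *
      ∑' m : ℕ, ENNReal.ofReal ρ ^ (m+1)) := by
    intro n
    have h1 : P (A n) ≤ ∑' m : ℕ, P (⋃ k ∈ Finset.range (2^(m+1)), E n m k) :=
      measure_iUnion_le _
    have h2 : ∀ m : ℕ, P (⋃ k ∈ Finset.range (2^(m+1)), E n m k) ≤
        M4 * (ENNReal.ofReal ((D n)⁻¹) * ENNReal.ofReal ρ ^ (m+1)) := by
      intro m
      calc P (⋃ k ∈ Finset.range (2^(m+1)), E n m k)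
          ≤ ∑ k ∈ Finset.range (2^(m+1)), P (E n m k) := measure_biUnion_finset_le _ _
        _ ≤ ∑ k ∈ Finset.range (2^(m+1)), M4 * ENNReal.ofReal ((2500/6561:ℝ)^(m+1) / D n) := by
            apply Finset.sum_le_sum
            intro k hk
            exact hEbd n m k (Finset.mem_range.1 hk)
        _ = (2^(m+1) : ℕ) * (M4 * ENNReal.ofReal ((2500/6561:ℝ)^(m+1) / D n)) := by
            rw [Finset.sum_const, Finset.card_range, nsmul_eq_mul]
        _ = M4 * (((2^(m+1) : ℕ) : ℝ≥0∞) * ENNReal.ofReal ((2500/6561:ℝ)^(m+1) / D n)) := by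
            ring
        _ = M4 * (ENNReal.ofReal ((D n)⁻¹) * ENNReal.ofReal ρ ^ (m+1)) := by
            congr 1
            rw [show (((2^(m+1) : ℕ)) : ℝ≥0∞) = ENNReal.ofReal ((2:ℝ)^(m+1)) by
              rw [← ENNReal.ofReal_natCast]; norm_num]
            rw [← ENNReal.ofReal_mul (by positivity),
              ← ENNReal.ofReal_pow (by norm_num [hρ] : (0:ℝ) ≤ ρ),
              ← ENNReal.ofReal_mul (inv_nonneg.2 (hDpos n).le)]
            apply (ENNReal.ofReal_eq_ofReal_iff
              (mul_nonneg (by positivity) (div_nonneg (by positivity) (hDpos n).le))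
              (mul_nonneg (inv_nonneg.2 (hDpos n).le) (by positivity))).2
            rw [div_eq_mul_inv, hρ, show (5000/6561:ℝ) = 2*(2500/6561) by norm_num,
              mul_pow]
            ring
    calc P (A n) ≤ ∑' m : ℕ, P (⋃ k ∈ Finset.range (2^(m+1)), E n m k) := h1
      _ ≤ ∑' m : ℕ, M4 * (ENNReal.ofReal ((D n)⁻¹) * ENNReal.ofReal ρ ^ (m+1)) :=
          ENNReal.tsum_le_tsum h2
      _ = M4 * (ENNReal.ofReal ((D n)⁻¹) * ∑' m : ℕ, ENNReal.ofReal ρ ^ (m+1)) := by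
          rw [ENNReal.tsum_mul_left, ENNReal.tsum_mul_left]
  -- summability
  have hρlt : ENNReal.ofReal ρ < 1 := by
    rw [hρ]
    exact ENNReal.ofReal_lt_one.2 (by norm_num)
  have hG : ∑' m : ℕ, ENNReal.ofReal ρ ^ (m+1) ≤ (1 - ENNReal.ofReal ρ)⁻¹ := by
    calc ∑' m : ℕ, ENNReal.ofReal ρ ^ (m+1) ≤ ∑' m : ℕ, ENNReal.ofReal ρ ^ m :=
        ENNReal.tsum_le_tsum (fun m => pow_le_pow_of_le_one (by positivity) hρlt.le (by omega))
      _ = (1 - ENNReal.ofReal ρ)⁻¹ := ENNReal.tsum_geometric _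
  have hGtop : (1 - ENNReal.ofReal ρ)⁻¹ ≠ ⊤ := by
    rw [ENNReal.inv_ne_top, ne_eq, tsub_eq_zero_iff_le]
    exact fun h => absurd (lt_of_lt_of_le hρlt h) (lt_irrefl _)
  have hDinv : ∀ n : ℕ, (D n)⁻¹ = (10/ε)^4 * (((n:ℝ)+1)^4)⁻¹ := by
    intro n
    rw [hD]
    have h1 : (0:ℝ) < (n:ℝ)+1 := by positivity
    field_simp
  have hsum : (∑' n : ℕ, P (A n)) ≠ ⊤ := by
    have hb : ∀ n : ℕ, P (A n) ≤
        (M4 * (1 - ENNReal.ofReal ρ)⁻¹ * ENNReal.ofReal ((10/ε)^4)) *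
          ENNReal.ofReal ((((n:ℝ)+1)^4)⁻¹) := by
      intro n
      calc P (A n) ≤ M4 * (ENNReal.ofReal ((D n)⁻¹) * ∑' m : ℕ, ENNReal.ofReal ρ ^ (m+1)) :=
          hAbd n
        _ ≤ M4 * (ENNReal.ofReal ((D n)⁻¹) * (1 - ENNReal.ofReal ρ)⁻¹) := by
            gcongr
        _ = (M4 * (1 - ENNReal.ofReal ρ)⁻¹ * ENNReal.ofReal ((10/ε)^4)) *
              ENNReal.ofReal ((((n:ℝ)+1)^4)⁻¹) := by
            rw [hDinv n, ENNReal.ofReal_mul (by positivity)]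
            ring
    have hsummable : Summable (fun n : ℕ => (((n:ℝ)+1)^4)⁻¹) := by
      have h1 : Summable (fun n : ℕ => 1/((n:ℝ))^4) :=
        Real.summable_one_div_nat_pow.2 (by norm_num)
      have h2 := (summable_nat_add_iff 1).2 h1
      apply h2.congr
      intro n
      push_cast
      rw [one_div]
    apply ne_top_of_le_ne_top ?_ (ENNReal.tsum_le_tsum hb)
    rw [ENNReal.tsum_mul_left]
    apply ENNReal.mul_ne_top
    · exact ENNReal.mul_ne_top (ENNReal.mul_ne_top M4_ne_top hGtop) ENNReal.ofReal_ne_top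
    · rw [← ENNReal.ofReal_tsum_of_nonneg (fun n => by positivity) hsummable]
      exact ENNReal.ofReal_ne_top
  -- Borel–Cantelli and chaining
  filter_upwards [MeasureTheory.ae_eventually_notMem hsum, hW.cont] with ω hBC hcont
  filter_upwards [hBC] with n hn
  intro t ht ht'
  apply chaining (fun u => W u ω) hcont (n:ℝ) (fun m => thr n m) (ε * ((n:ℝ)+1))
    (fun m => (hthrpos n m).le) ?hS ?hbd ht ht'
  case hS =>
    intro M
    have hgeo : ∑ m ∈ Finset.range M, (9/10:ℝ)^m ≤ 10 := by
      have hts : ∑' m : ℕ, (9/10:ℝ)^m = 10 := by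
        rw [tsum_geometric_of_lt_one (by norm_num) (by norm_num)]
        norm_num
      calc ∑ m ∈ Finset.range M, (9/10:ℝ)^m ≤ ∑' m : ℕ, (9/10:ℝ)^m :=
          Summable.sum_le_tsum _ (fun i _ => by positivity)
            (summable_geometric_of_lt_one (by norm_num) (by norm_num))
        _ = 10 := hts
    have : ∑ m ∈ Finset.range M, thr n m
        = ε * ((n:ℝ)+1) * (1/10) * (9/10) * ∑ m ∈ Finset.range M, (9/10:ℝ)^m := by
      rw [Finset.mul_sum]
      apply Finset.sum_congr rfl
      intro m _
      simp only [hthr]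
      rw [pow_succ]
      ring
    rw [this]
    have hnn : (0:ℝ) ≤ ε * ((n:ℝ)+1) := by positivity
    nlinarith [hgeo, hnn]
  case hbd =>
    intro m k hk
    simp only [hA, Set.mem_iUnion, not_exists] at hn
    have := hn m k (Finset.mem_range.2 hk)
    rw [hE] at this
    simp only [Set.mem_setOf_eq, not_lt] at this
    exact this

theorem stmt11 (r b σ β : ℝ) (hbr : r < b) (hr : 0 < r) (hσ : σ ≠ 0) (hβ : 2 < β)
    (hη : 0 < β * (b - r)^2 / (2 * (β - 1) * σ^2) - β * r) (x₀ : ℝ)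
    {Ω : Type*} [MeasurableSpace Ω] (P : Measure Ω) [IsProbabilityMeasure P]
    (W : ℝ → Ω → ℝ) (hW : IsStandardBrownianMotion P W)
    (X : ℝ → Ω → ℝ)
    (hX : X = fun t ω => x₀ * Real.exp
      ((r - (2 * β - 1) * (b - r)^2 / (2 * (β - 1)^2 * σ^2)) * t
        - ((b - r) / ((β - 1) * σ)) * W t ω)) :
    ∀ᵐ ω ∂P, Tendsto (fun t : ℝ => X t ω) atTop (nhds 0) := by
  have hβ1 : (0:ℝ) < β - 1 := by linarith
  have hσ2 : (0:ℝ) < σ^2 := by positivity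
  have hbr2 : (0:ℝ) < (b - r)^2 := by
    have : b - r ≠ 0 := by intro h; linarith [sub_eq_zero.1 h]
    positivity
  set μ0 : ℝ := r - (2 * β - 1) * (b - r)^2 / (2 * (β - 1)^2 * σ^2) with hμ0def
  set c : ℝ := (b - r) / ((β - 1) * σ) with hcdef
  have hμ0 : μ0 < 0 := by
    have hβpos : (0:ℝ) < β := by linarith
    have h1 : β * r < β * ((b - r)^2 / (2 * (β - 1) * σ^2)) := by
      have he : β * (b - r)^2 / (2 * (β - 1) * σ^2)
          = β * ((b - r)^2 / (2 * (β - 1) * σ^2)) := by ring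
      rw [← he]
      linarith
    have h2 : r < (b - r)^2 / (2 * (β - 1) * σ^2) := (mul_lt_mul_iff_right₀ hβpos).1 h1
    have h3 : (b - r)^2 / (2 * (β - 1) * σ^2)
        ≤ (2 * β - 1) * (b - r)^2 / (2 * (β - 1)^2 * σ^2) := by
      rw [div_le_div_iff₀ (by positivity) (by positivity)]
      nlinarith [mul_pos hbr2 hσ2, mul_pos (mul_pos hbr2 hσ2) hβ1]
    rw [hμ0def]
    linarith
  set ε : ℝ := -μ0 / (4 * (|c| + 1)) with hεdef
  have hε : 0 < ε := by
    rw [hεdef]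
    apply div_pos (by linarith) (by positivity)
  filter_upwards [bm_slln P W hW, bm_osc P W hW ε hε] with ω h1 h2
  simp only [hX]
  have hexp : Tendsto (fun t : ℝ => μ0 * t - c * W t ω) atTop atBot := by
    have hev1 : ∀ᶠ n : ℕ in atTop, |W n ω| ≤ ε * n := by
      have h := h1.eventually (Metric.ball_mem_nhds (0:ℝ) hε)
      filter_upwards [h, eventually_ge_atTop 1] with n hn hn1
      rw [Real.dist_eq, sub_zero] at hn
      have hnpos : (0:ℝ) < n := by exact_mod_cast hn1
      rw [abs_div, abs_of_pos hnpos, div_lt_iff₀ hnpos] at hn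
      linarith
    obtain ⟨N, hN⟩ := eventually_atTop.1 (hev1.and h2)
    have hbd : ∀ᶠ t : ℝ in atTop, μ0 * t - c * W t ω ≤ μ0 / 4 * t := by
      filter_upwards [eventually_ge_atTop (max ((N:ℝ)) 1)] with t ht
      have ht1 : (1:ℝ) ≤ t := le_trans (le_max_right _ _) ht
      have htN : (N:ℝ) ≤ t := le_trans (le_max_left _ _) ht
      set n : ℕ := ⌊t⌋₊ with hn
      have ht0 : (0:ℝ) ≤ t := by linarith
      have hn1 : (n:ℝ) ≤ t := Nat.floor_le ht0
      have hn2 : t < (n:ℝ) + 1 := Nat.lt_floor_add_one t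
      have hnN : N ≤ n := Nat.le_floor htN
      obtain ⟨habs, hosc⟩ := hN n hnN
      have hWt : |W t ω| ≤ 3 * ε * t := by
        calc |W t ω| ≤ |W n ω| + |W t ω - W (n:ℝ) ω| := by
              have := abs_add_le (W n ω) (W t ω - W (n:ℝ) ω)
              simpa using this
          _ ≤ ε * n + ε * ((n:ℝ) + 1) := add_le_add habs (hosc t hn1 hn2)
          _ ≤ ε * t + ε * (t + 1) := by
              have := hε.le
              gcongr
          _ ≤ 3 * ε * t := by nlinarith
      have h5 : -(c * W t ω) ≤ |c| * |W t ω| := by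
        calc -(c * W t ω) ≤ |c * W t ω| := neg_le_abs _
          _ = |c| * |W t ω| := abs_mul _ _
      have h6 : |c| * |W t ω| ≤ |c| * (3 * ε * t) :=
        mul_le_mul_of_nonneg_left hWt (abs_nonneg c)
      have h7 : |c| * (3 * ε * t) ≤ (|c| + 1) * (3 * ε * t) := by
        apply mul_le_mul_of_nonneg_right (by linarith) (by positivity)
      have hεe : 4 * (|c| + 1) * ε = -μ0 := by
        rw [hεdef]
        field_simp
      have h8 : (|c| + 1) * (3 * ε * t) = 3 / 4 * (-μ0) * t := by
        linear_combination (3 / 4 * t) * hεe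
      have h9 : -μ0 ≥ 0 := by linarith
      nlinarith [h5, h6, h7, h8]
    have hlin : Tendsto (fun t : ℝ => μ0 / 4 * t) atTop atBot :=
      Tendsto.const_mul_atTop_of_neg (div_neg_of_neg_of_pos hμ0 (by norm_num)) tendsto_id
    exact tendsto_atBot_mono' atTop hbd hlin
  have hcomp := (Real.tendsto_exp_atBot.comp hexp).const_mul x₀
  simpa using hcomp
end
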